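/- Define g(c) = 2/c − 1/(1 − exp(−c/2)) + 1 for c > 0. Then g is strictly monotone (decreasing) on (0,∞), g(c) → 1/2 as c → 0+, and g(c) → 0 as c → ∞; hence for every ρ > 2 there is a unique c > 0 with g(c) = 1/ρ. -/

import Mathlib

open Real Filter Set


lemma aux_exp_lt_one {c : ℝ} (hc : 0 < c) : Real.exp (-c / 2) < 1 := by
  rw [Real.exp_lt_one_iff]; linarith

lemma aux_sub_pos {c : ℝ} (hc : 0 < c) : 0 < 1 - Real.exp (-c / 2) :=
  sub_pos.mpr (aux_exp_lt_one hc)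

lemma g_hasDeriv {c : ℝ} (hc : 0 < c) :
    HasDerivAt (fun c => 2 / c - 1 / (1 - Real.exp (-c / 2)) + 1)
      (Real.exp (-c/2) / 2 / (1 - Real.exp (-c/2))^2 - 2 / c^2) c := by
  have hne : 1 - Real.exp (-c / 2) ≠ 0 := (aux_sub_pos hc).ne'
  have h2 : HasDerivAt (fun c : ℝ => -c / 2) (-(1/2)) c := by
    have := ((hasDerivAt_id c).neg.div_const 2)
    exact this.congr_deriv (by norm_num)
  have h3 : HasDerivAt (fun c : ℝ => Real.exp (-c / 2)) (Real.exp (-c/2) * -(1/2)) c :=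
    (Real.hasDerivAt_exp _).comp c h2
  have h4 : HasDerivAt (fun c : ℝ => 1 - Real.exp (-c / 2)) (-(Real.exp (-c/2) * -(1/2))) c :=
    h3.const_sub 1
  have h5 := h4.inv hne
  have h1 : HasDerivAt (fun c : ℝ => 2 / c) (-(2 / c^2)) c := by
    have := (hasDerivAt_id c).inv hc.ne'
    have h := this.const_mul 2
    exact h.congr_deriv (by simp only [id]; ring)
  simp only [← one_div] at h5
  have := (h1.sub h5).add_const 1
  exact this.congr_deriv (by ring)

lemma g_deriv_neg {c : ℝ} (hc : 0 < c) :
    Real.exp (-c/2) / 2 / (1 - Real.exp (-c/2))^2 - 2 / c^2 < 0 := by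
  have hu := aux_sub_pos hc
  have key : c^2 * Real.exp (-c/2) < 4 * (1 - Real.exp (-c/2))^2 := by
    set E := Real.exp (-c/4) with hE
    have hEpos : 0 < E := Real.exp_pos _
    have hE2 : E^2 = Real.exp (-c/2) := by
      rw [hE, sq, ← Real.exp_add]; ring_nf
    have hEinv : Real.exp (c/4) * E = 1 := by
      rw [hE, ← Real.exp_add]; ring_nf; exact Real.exp_zero
    have hsinh : c/4 < Real.sinh (c/4) := Real.self_lt_sinh_iff.mpr (by linarith)
    rw [Real.sinh_eq] at hsinh
    have h6 : c * E < 2 * (1 - E^2) := by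
      have : c/4 < (Real.exp (c/4) - E) / 2 := by
        simpa [hE, neg_div] using hsinh
      nlinarith [hEpos]
    have hpos : 0 < c * E := mul_pos hc hEpos
    have := mul_self_lt_mul_self hpos.le h6
    rw [← hE2]
    nlinarith
  rw [sub_neg]
  rw [div_lt_div_iff₀ (by positivity) (by positivity)]
  nlinarith


lemma tendA : Tendsto (fun u : ℝ => (Real.exp u - 1 - u) / u^2) (nhdsWithin 0 (Set.Ioi 0)) (nhds (1/2)) := by
  rw [← tendsto_sub_nhds_zero_iff]
  apply squeeze_zero_norm' (a := fun u : ℝ => u * (2/9))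
  · filter_upwards [Ioo_mem_nhdsGT_of_mem (by norm_num : (0:ℝ) ∈ Set.Ico 0 1)] with u hu
    obtain ⟨hu0, hu1⟩ := hu
    have hb := Real.exp_bound (x := u) (by rw [abs_of_pos hu0]; linarith) (n := 3) (by norm_num)
    have hsum : ∑ i ∈ Finset.range 3, u ^ i / (Nat.factorial i : ℝ) = 1 + u + u^2/2 := by
      simp [Finset.sum_range_succ, Nat.factorial]
    rw [hsum, abs_of_pos hu0] at hb
    have hb' : |Real.exp u - 1 - u - u^2/2| ≤ u^3 * (2/9) := by
      have : u ^ 3 * (↑(Nat.succ 3) / (↑(Nat.factorial 3) * ↑(3:ℕ))) = u^3 * (2/9) := by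
        norm_num [Nat.factorial]
      calc |Real.exp u - 1 - u - u^2/2| = |Real.exp u - (1 + u + u^2/2)| := by ring_nf
        _ ≤ u^3 * (2/9) := by rw [← this]; exact hb
    have hu2 : (0:ℝ) < u^2 := by positivity
    have : (Real.exp u - 1 - u) / u^2 - 1/2 = (Real.exp u - 1 - u - u^2/2) / u^2 := by
      rw [eq_comm, sub_div, div_right_comm, div_self hu2.ne']
    rw [Real.norm_eq_abs, this, abs_div, abs_of_pos hu2, div_le_iff₀ hu2]
    calc |Real.exp u - 1 - u - u^2/2| ≤ u^3 * (2/9) := hb'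
      _ = u * (2/9) * u^2 := by ring
  · have : Tendsto (fun u : ℝ => u * (2/9)) (nhds 0) (nhds (0 * (2/9))) :=
      (continuous_id.mul continuous_const).tendsto 0
    simpa using this.mono_left nhdsWithin_le_nhds

lemma tendB : Tendsto (fun u : ℝ => (Real.exp u - 1) / u) (nhdsWithin 0 (Set.Ioi 0)) (nhds 1) := by
  rw [← tendsto_sub_nhds_zero_iff]
  apply squeeze_zero_norm' (a := fun u : ℝ => u * (3/4))
  · filter_upwards [Ioo_mem_nhdsGT_of_mem (by norm_num : (0:ℝ) ∈ Set.Ico 0 1)] with u hu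
    obtain ⟨hu0, hu1⟩ := hu
    have hb := Real.exp_bound (x := u) (by rw [abs_of_pos hu0]; linarith) (n := 2) (by norm_num)
    have hsum : ∑ i ∈ Finset.range 2, u ^ i / (Nat.factorial i : ℝ) = 1 + u := by
      simp [Finset.sum_range_succ, Nat.factorial]
    rw [hsum, abs_of_pos hu0] at hb
    have hb' : |Real.exp u - 1 - u| ≤ u^2 * (3/4) := by
      calc |Real.exp u - 1 - u| = |Real.exp u - (1 + u)| := by ring_nf
        _ ≤ u ^ 2 * (↑(Nat.succ 2) / (↑(Nat.factorial 2) * ↑(2:ℕ))) := hb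
        _ = u^2 * (3/4) := by norm_num [Nat.factorial]
    have : (Real.exp u - 1) / u - 1 = (Real.exp u - 1 - u) / u := by
      field_simp
    rw [Real.norm_eq_abs, this, abs_div, abs_of_pos hu0, div_le_iff₀ hu0]
    calc |Real.exp u - 1 - u| ≤ u^2 * (3/4) := hb'
      _ = u * (3/4) * u := by ring
  · have : Tendsto (fun u : ℝ => u * (3/4)) (nhds 0) (nhds (0 * (3/4))) :=
      (continuous_id.mul continuous_const).tendsto 0
    simpa using this.mono_left nhdsWithin_le_nhds

lemma g_tendsto_half : Tendsto (fun c : ℝ => 2 / c - 1 / (1 - Real.exp (-c / 2)) + 1)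
    (nhdsWithin 0 (Set.Ioi 0)) (nhds (1/2)) := by
  have hmap : Tendsto (fun c : ℝ => c / 2) (nhdsWithin 0 (Set.Ioi 0)) (nhdsWithin 0 (Set.Ioi 0)) := by
    apply tendsto_nhdsWithin_of_tendsto_nhds_of_eventually_within
    · have : Tendsto (fun c : ℝ => c / 2) (nhds 0) (nhds (0/2)) :=
        (continuous_id.div_const 2).tendsto 0
      simpa using this.mono_left nhdsWithin_le_nhds
    · filter_upwards [self_mem_nhdsWithin] with x hx
      exact half_pos (Set.mem_Ioi.mp hx)
  have hquot := (tendA.comp hmap).div (tendB.comp hmap) one_ne_zero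
  have heq : ∀ᶠ c in nhdsWithin (0:ℝ) (Set.Ioi 0),
      ((fun u : ℝ => (Real.exp u - 1 - u) / u^2) ∘ fun c => c/2) c /
      ((fun u : ℝ => (Real.exp u - 1) / u) ∘ fun c => c/2) c
      = 2 / c - 1 / (1 - Real.exp (-c / 2)) + 1 := by
    filter_upwards [self_mem_nhdsWithin] with c hc
    have hc0 : (0:ℝ) < c := hc
    have hu : (0:ℝ) < c/2 := half_pos hc0
    have hex : 1 < Real.exp (c/2) := Real.one_lt_exp_iff.mpr hu
    have hne1 : Real.exp (c/2) - 1 ≠ 0 := by linarith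
    have hneg : Real.exp (-c/2) = (Real.exp (c/2))⁻¹ := by
      rw [← Real.exp_neg]; ring_nf
    simp only [Function.comp]
    rw [hneg]
    have hne2 : 1 - (Real.exp (c/2))⁻¹ ≠ 0 := by
      have : (Real.exp (c/2))⁻¹ < 1 := by
        rw [inv_lt_one_iff₀]; right; exact hex
      linarith
    field_simp
    ring
  have := hquot.congr' heq
  norm_num at this
  convert this using 2
  norm_num

lemma g_tendsto_zero : Tendsto (fun c : ℝ => 2 / c - 1 / (1 - Real.exp (-c / 2)) + 1)
    atTop (nhds 0) := by
  have T1 : Tendsto (fun c : ℝ => 2 / c) atTop (nhds 0) :=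
    tendsto_const_nhds.div_atTop tendsto_id
  have Tb : Tendsto (fun c : ℝ => -c / 2) atTop atBot := by
    apply Tendsto.atBot_div_const (by norm_num : (0:ℝ) < 2)
    exact tendsto_neg_atTop_atBot
  have T2 : Tendsto (fun c : ℝ => Real.exp (-c / 2)) atTop (nhds 0) :=
    Real.tendsto_exp_atBot.comp Tb
  have T3 : Tendsto (fun c : ℝ => 1 / (1 - Real.exp (-c / 2))) atTop (nhds (1 / (1 - 0))) :=
    tendsto_const_nhds.div (tendsto_const_nhds.sub T2) (by norm_num)
  have := (T1.sub T3).add_const 1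
  norm_num at this
  convert this using 2
  norm_num

/-- g(c) = 2/c − 1/(1 − e^{−c/2}) + 1 is strictly decreasing on (0,∞),
tends to 1/2 at 0⁺ and to 0 at ∞, hence for every ρ > 2 there is a unique c > 0
with g(c) = 1/ρ. -/
theorem papr_monotone_function :
    let g : ℝ → ℝ := fun c => 2 / c - 1 / (1 - Real.exp (-c / 2)) + 1
    StrictAntiOn g (Set.Ioi 0) ∧
    Tendsto g (nhdsWithin 0 (Set.Ioi 0)) (nhds (1 / 2)) ∧
    Tendsto g atTop (nhds 0) ∧
    ∀ ρ : ℝ, 2 < ρ → ∃! c : ℝ, 0 < c ∧ g c = 1 / ρ := by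
  intro g
  have hanti : StrictAntiOn g (Set.Ioi 0) := by
    apply strictAntiOn_of_deriv_neg (convex_Ioi 0)
    · intro x hx
      exact (g_hasDeriv hx).continuousAt.continuousWithinAt
    · intro x hx
      rw [interior_Ioi] at hx
      rw [(g_hasDeriv hx).deriv]
      exact g_deriv_neg hx
  refine ⟨hanti, by exact_mod_cast g_tendsto_half, g_tendsto_zero, ?_⟩
  intro ρ hρ
  have hρ0 : 0 < ρ := by linarith
  have hy1 : (0:ℝ) < 1/ρ := by positivity
  have hy2 : 1/ρ < 1/2 := by
    rw [div_lt_div_iff₀ hρ0 two_pos]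
    linarith
  have ha : ∀ᶠ a in nhdsWithin (0:ℝ) (Set.Ioi 0), 1/ρ < g a :=
    g_tendsto_half.eventually (eventually_gt_nhds hy2)
  obtain ⟨a, haρ, ha0⟩ := (ha.and self_mem_nhdsWithin).exists
  have hb : ∀ᶠ b in atTop, g b < 1/ρ :=
    g_tendsto_zero.eventually (eventually_lt_nhds hy1)
  obtain ⟨b, hbρ, hab⟩ := (hb.and (eventually_gt_atTop a)).exists
  have hcont : ContinuousOn g (Set.Icc a b) := fun x hx =>
    (g_hasDeriv (lt_of_lt_of_le ha0 hx.1)).continuousAt.continuousWithinAt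
  have hsub := intermediate_value_Icc' hab.le hcont
  have hmem : (1/ρ) ∈ Set.Icc (g b) (g a) := ⟨hbρ.le, haρ.le⟩
  obtain ⟨c, hc, hgc⟩ := hsub hmem
  refine ⟨c, ⟨lt_of_lt_of_le ha0 hc.1, hgc⟩, ?_⟩
  rintro c' ⟨hc'0, hgc'⟩
  exact hanti.injOn hc'0 (lt_of_lt_of_le ha0 hc.1) (hgc'.trans hgc.symm)
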